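/- Let α < β be real numbers and let g : [α,β] → ℝ be continuous and nondecreasing. Then a point γ₀ ∈ [α,β] satisfies F(γ₀) = min_{γ∈[α,β]} F(γ) if and only if g(γ₀) = (g(α) + g(β))/2. -/
import Mathlib

open Set intervalIntegral MeasureTheory

/-- For a continuous nondecreasing `g` on `[α,β]`, the fidelity
`F(γ) = ∫_α^γ (g(α)-g)² + ∫_γ^β (g(β)-g)²` is minimized at `γ₀ ∈ [α,β]` if and only if
`g(γ₀) = (g(α)+g(β))/2`. -/
theorem fidelity_min_iff_midpoint (α β : ℝ) (hαβ : α < β) (g : ℝ → ℝ)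
    (hg : ContinuousOn g (Set.Icc α β)) (hmono : MonotoneOn g (Set.Icc α β))
    (γ₀ : ℝ) (hγ₀ : γ₀ ∈ Set.Icc α β) :
    (∀ γ ∈ Set.Icc α β,
        (∫ x in α..γ₀, (g α - g x) ^ 2) + (∫ x in γ₀..β, (g β - g x) ^ 2)
          ≤ (∫ x in α..γ, (g α - g x) ^ 2) + (∫ x in γ..β, (g β - g x) ^ 2))
      ↔ g γ₀ = (g α + g β) / 2 := by
  have hαm : α ∈ Icc α β := left_mem_Icc.2 hαβ.le
  have hβm : β ∈ Icc α β := right_mem_Icc.2 hαβ.le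
  set f1 : ℝ → ℝ := fun x => (g α - g x) ^ 2 with hf1
  set f2 : ℝ → ℝ := fun x => (g β - g x) ^ 2 with hf2
  set h : ℝ → ℝ := fun x => f1 x - f2 x with hh
  have hcont1 : ContinuousOn f1 (Icc α β) := (continuousOn_const.sub hg).pow 2
  have hcont2 : ContinuousOn f2 (Icc α β) := (continuousOn_const.sub hg).pow 2
  have hconth : ContinuousOn h (Icc α β) := hcont1.sub hcont2
  have hint : ∀ f : ℝ → ℝ, ContinuousOn f (Icc α β) → ∀ a ∈ Icc α β, ∀ b ∈ Icc α β,
      IntervalIntegrable f volume a b := fun f hf a ha b hb =>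
    (hf.mono (uIcc_subset_Icc ha hb)).intervalIntegrable
  have hab : g α ≤ g β := hmono hαm hβm hαβ.le
  have key : ∀ γ ∈ Icc α β,
      (∫ x in α..γ, f1 x) + (∫ x in γ..β, f2 x)
        = ((∫ x in α..γ₀, f1 x) + (∫ x in γ₀..β, f2 x)) + ∫ x in γ₀..γ, h x := by
    intro γ hγ
    have e1 : (∫ x in α..γ₀, f1 x) + (∫ x in γ₀..γ, f1 x) = ∫ x in α..γ, f1 x :=
      integral_add_adjacent_intervals (hint f1 hcont1 α hαm γ₀ hγ₀) (hint f1 hcont1 γ₀ hγ₀ γ hγ)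
    have e2 : (∫ x in γ₀..γ, f2 x) + (∫ x in γ..β, f2 x) = ∫ x in γ₀..β, f2 x :=
      integral_add_adjacent_intervals (hint f2 hcont2 γ₀ hγ₀ γ hγ) (hint f2 hcont2 γ hγ β hβm)
    have e3 : (∫ x in γ₀..γ, h x) = (∫ x in γ₀..γ, f1 x) - ∫ x in γ₀..γ, f2 x :=
      integral_sub (hint f1 hcont1 γ₀ hγ₀ γ hγ) (hint f2 hcont2 γ₀ hγ₀ γ hγ)
    linarith
  constructor
  · -- minimality ⇒ midpoint
    intro H
    have H' : ∀ γ ∈ Icc α β, 0 ≤ ∫ x in γ₀..γ, h x := by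
      intro γ hγ
      have := H γ hγ
      rw [key γ hγ] at this
      linarith
    have hga : g α ≤ g γ₀ := hmono hαm hγ₀ hγ₀.1
    have hgb : g γ₀ ≤ g β := hmono hγ₀ hβm hγ₀.2
    by_contra hne
    rcases lt_or_gt_of_ne hne with hlt | hgt
    · -- g γ₀ < midpoint : move right
      have hγ₀β : γ₀ < β := by
        rcases lt_or_eq_of_le hγ₀.2 with h' | h'
        · exact h'
        · exfalso; rw [h'] at hlt; linarith
      have hhneg : h γ₀ < 0 := by
        have : h γ₀ = (g β - g α) * (2 * g γ₀ - (g α + g β)) := by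
          simp only [hh, hf1, hf2]; ring
        nlinarith
      obtain ⟨δ, hδ, hδ'⟩ := Metric.continuousWithinAt_iff.1 (hconth γ₀ hγ₀) (-h γ₀)
        (by linarith)
      set γ : ℝ := min β (γ₀ + δ / 2) with hγdef
      have hγγ₀ : γ₀ < γ := lt_min hγ₀β (by linarith)
      have hγmem : γ ∈ Icc α β := ⟨hγ₀.1.trans hγγ₀.le, min_le_left _ _⟩
      have hpos : 0 < ∫ x in γ₀..γ, -h x := by
        apply intervalIntegral_pos_of_pos_on
          ((hint h hconth γ₀ hγ₀ γ hγmem).neg)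
        · intro x hx
          show (0:ℝ) < -h x
          have hxmem : x ∈ Icc α β := ⟨hγ₀.1.trans hx.1.le, hx.2.le.trans hγmem.2⟩
          have hdist : dist x γ₀ < δ := by
            rw [Real.dist_eq, abs_lt]
            constructor <;>
              [linarith [hx.1]; linarith [hx.2, min_le_right β (γ₀ + δ / 2)]]
          have := hδ' hxmem hdist
          rw [Real.dist_eq, abs_lt] at this
          linarith [this.1, this.2]
        · exact hγγ₀
      rw [intervalIntegral.integral_neg] at hpos
      linarith [H' γ hγmem]
    · -- g γ₀ > midpoint : move left
      have hαγ₀ : α < γ₀ := by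
        rcases lt_or_eq_of_le hγ₀.1 with h' | h'
        · exact h'
        · exfalso; rw [← h'] at hgt; linarith
      have hhpos : 0 < h γ₀ := by
        have : h γ₀ = (g β - g α) * (2 * g γ₀ - (g α + g β)) := by
          simp only [hh, hf1, hf2]; ring
        nlinarith
      obtain ⟨δ, hδ, hδ'⟩ := Metric.continuousWithinAt_iff.1 (hconth γ₀ hγ₀) (h γ₀) hhpos
      set γ : ℝ := max α (γ₀ - δ / 2) with hγdef
      have hγγ₀ : γ < γ₀ := max_lt hαγ₀ (by linarith)
      have hγmem : γ ∈ Icc α β := ⟨le_max_left _ _, hγγ₀.le.trans hγ₀.2⟩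
      have hpos : 0 < ∫ x in γ..γ₀, h x := by
        apply intervalIntegral_pos_of_pos_on (hint h hconth γ hγmem γ₀ hγ₀)
        · intro x hx
          have hxmem : x ∈ Icc α β := ⟨hγmem.1.trans hx.1.le, hx.2.le.trans hγ₀.2⟩
          have hdist : dist x γ₀ < δ := by
            rw [Real.dist_eq, abs_lt]
            constructor <;>
              [linarith [hx.1, le_max_right α (γ₀ - δ / 2)]; linarith [hx.2]]
          have := hδ' hxmem hdist
          rw [Real.dist_eq, abs_lt] at this
          linarith [this.1, this.2]
        · exact hγγ₀
      have := H' γ hγmem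
      rw [intervalIntegral.integral_symm] at this
      linarith
  · -- midpoint ⇒ minimality
    intro hmid γ hγ
    rw [key γ hγ]
    have hnn : 0 ≤ ∫ x in γ₀..γ, h x := by
      rcases le_total γ₀ γ with hle | hle
      · apply intervalIntegral.integral_nonneg hle
        intro x hx
        have hxmem : x ∈ Icc α β := ⟨hγ₀.1.trans hx.1, hx.2.trans hγ.2⟩
        have hgx : g γ₀ ≤ g x := hmono hγ₀ hxmem hx.1
        have : h x = (g β - g α) * (2 * g x - (g α + g β)) := by
          simp only [hh, hf1, hf2]; ring
        nlinarith
      · rw [intervalIntegral.integral_symm]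
        have hnp : (∫ x in γ..γ₀, h x) ≤ 0 := by
          have hneg : 0 ≤ ∫ x in γ..γ₀, -h x := by
            apply intervalIntegral.integral_nonneg hle
            intro x hx
            have hxmem : x ∈ Icc α β := ⟨hγ.1.trans hx.1, hx.2.trans hγ₀.2⟩
            have hgx : g x ≤ g γ₀ := hmono hxmem hγ₀ hx.2
            have : h x = (g β - g α) * (2 * g x - (g α + g β)) := by
              simp only [hh, hf1, hf2]; ring
            nlinarith
          rw [intervalIntegral.integral_neg] at hneg
          linarith
        linarith
    linarith
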